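/- Let F, G be three times differentiable distribution functions with strictly positive densities on the interiors of their supports. If F ≤₃ G, then for every α ∈ (0, 1/2), G^{-1}(1-α) − 3G^{-1}(η_F(1-α)) + 3G^{-1}(η_F(α)) − G^{-1}(α) ≥ 0, where η_F(q) = F((2/3)F^{-1}(q) + (1/3)F^{-1}(1-q)). -/

import Mathlib

/-- A three times differentiable distribution function with interval support
and strictly positive density on the interior `D` of its support, together
with its inverse (= quantile function) `inv : (0,1) → D`. -/
structure CDF where
  /-- the distribution function -/
  F : ℝ → ℝ
  /-- the interior of the support, an open interval -/
  D : Set ℝ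
  /-- the inverse (quantile) function -/
  inv : ℝ → ℝ
  isOpen : IsOpen D
  ordConn : D.OrdConnected
  nonempty : D.Nonempty
  smooth : ContDiffOn ℝ 3 F D
  smooth_inv : ContDiffOn ℝ 3 inv (Set.Ioo 0 1)
  density_pos : ∀ x ∈ D, 0 < deriv F x
  mapsTo : Set.MapsTo F D (Set.Ioo 0 1)
  inv_mapsTo : Set.MapsTo inv (Set.Ioo 0 1) D
  left_inv : ∀ x ∈ D, inv (F x) = x
  right_inv : ∀ p ∈ Set.Ioo (0:ℝ) 1, F (inv p) = p

/-- `R_{FG} = G⁻¹ ∘ F`. -/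
def R (F G : CDF) : ℝ → ℝ := fun x => G.inv (F.F x)

/-- the kurtosis order `F ≤₃ G` : the third derivative of `R_{FG}` is
nonnegative on the interior of the support of `F`. -/
def le3 (F G : CDF) : Prop := ∀ t ∈ F.D, 0 ≤ deriv (deriv (deriv (R F G))) t

private lemma hasDerivAt_shift {f : ℝ → ℝ} {d h x : ℝ} (hf : HasDerivAt f d (x + h)) :
    HasDerivAt (fun y => f (y + h)) d x := by
  simpa [Function.comp_def] using hf.comp x ((hasDerivAt_id x).add_const h)

/-- If `F ≤₃ G`, then for every `α ∈ (0, 1/2)`,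
`G⁻¹(1-α) - 3 G⁻¹(η_F(1-α)) + 3 G⁻¹(η_F(α)) - G⁻¹(α) ≥ 0`, where
`η_F(q) = F((2/3) F⁻¹(q) + (1/3) F⁻¹(1-q))`. -/
theorem stmt4 (F G : CDF) (h : le3 F G) (α : ℝ) (hα : α ∈ Set.Ioo (0:ℝ) (1/2)) :
    0 ≤ G.inv (1-α)
        - 3 * G.inv (F.F ((2/3) * F.inv (1-α) + (1/3) * F.inv α))
        + 3 * G.inv (F.F ((2/3) * F.inv α + (1/3) * F.inv (1-α)))
        - G.inv α := by
  obtain ⟨hα0, hα2⟩ := hα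
  have hαmem : α ∈ Set.Ioo (0:ℝ) 1 := ⟨hα0, by linarith⟩
  have hβmem : (1 - α) ∈ Set.Ioo (0:ℝ) 1 := ⟨by linarith, by linarith⟩
  set a := F.inv α with ha_def
  set b := F.inv (1 - α) with hb_def
  have ha : a ∈ F.D := F.inv_mapsTo hαmem
  have hb : b ∈ F.D := F.inv_mapsTo hβmem
  have hDconv : Convex ℝ F.D := convex_iff_ordConnected.mpr F.ordConn
  have hintD : interior F.D = F.D := F.isOpen.interior_eq
  -- a < b
  have hFmono : StrictMonoOn F.F F.D :=
    strictMonoOn_of_deriv_pos hDconv F.smooth.continuousOn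
      (fun x hx => F.density_pos x (hintD ▸ hx))
  have hFa : F.F a = α := F.right_inv α hαmem
  have hFb : F.F b = 1 - α := F.right_inv (1 - α) hβmem
  have hab : a < b := by
    by_contra hle
    push_neg at hle
    rcases eq_or_lt_of_le hle with heq | hlt
    · rw [← heq] at hFa; linarith [hFa ▸ hFb]
    · have := hFmono hb ha hlt; rw [hFa, hFb] at this; linarith
  set d := (b - a) / 3 with hd_def
  have hd : 0 < d := by rw [hd_def]; linarith
  have hIccD : Set.Icc a b ⊆ F.D := F.ordConn.out ha hb
  -- smoothness of R
  have hR : ContDiffOn ℝ 3 (R F G) F.D := G.smooth_inv.comp F.smooth F.mapsTo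
  have hR1 : ContDiffOn ℝ 2 (deriv (R F G)) F.D :=
    hR.deriv_of_isOpen F.isOpen (by norm_num)
  have hR2 : ContDiffOn ℝ 1 (deriv (deriv (R F G))) F.D :=
    hR1.deriv_of_isOpen F.isOpen (by norm_num)
  have hRdiff : ∀ x ∈ F.D, HasDerivAt (R F G) (deriv (R F G) x) x := fun x hx =>
    ((hR.differentiableOn (by norm_num)).differentiableAt
      (F.isOpen.mem_nhds hx)).hasDerivAt
  have hR1diff : ∀ x ∈ F.D, HasDerivAt (deriv (R F G)) (deriv (deriv (R F G)) x) x :=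
    fun x hx => ((hR1.differentiableOn (by norm_num)).differentiableAt
      (F.isOpen.mem_nhds hx)).hasDerivAt
  -- R'' is monotone on D
  have hmono2 : MonotoneOn (deriv (deriv (R F G))) F.D := by
    apply monotoneOn_of_deriv_nonneg hDconv hR2.continuousOn
    · rw [hintD]; exact hR2.differentiableOn (by norm_num)
    · rw [hintD]; exact h
  -- the set U where both x and x + d are in D
  set U : Set ℝ := F.D ∩ (fun x => x + d) ⁻¹' F.D with hU_def
  have hUopen : IsOpen U := F.isOpen.inter (F.isOpen.preimage (by continuity))
  set S : ℝ → ℝ := fun x => R F G (x + d) - R F G x with hS_def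
  set S' : ℝ → ℝ := fun x => deriv (R F G) (x + d) - deriv (R F G) x with hS'_def
  have hSderiv : ∀ x ∈ U, HasDerivAt S (S' x) x := by
    intro x hx
    exact (hasDerivAt_shift (hRdiff _ hx.2)).sub (hRdiff _ hx.1)
  have hSderiv_eq : ∀ x ∈ U, deriv S x = S' x := fun x hx => (hSderiv x hx).deriv
  have hS'deriv : ∀ x ∈ U, HasDerivAt S'
      (deriv (deriv (R F G)) (x + d) - deriv (deriv (R F G)) x) x := by
    intro x hx
    exact (hasDerivAt_shift (hR1diff _ hx.2)).sub (hR1diff _ hx.1)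
  have hDS : ∀ x ∈ U, HasDerivAt (deriv S)
      (deriv (deriv (R F G)) (x + d) - deriv (deriv (R F G)) x) x := by
    intro x hx
    have hev : deriv S =ᶠ[nhds x] S' :=
      Filter.eventuallyEq_of_mem (hUopen.mem_nhds hx) hSderiv_eq
    exact (hS'deriv x hx).congr_of_eventuallyEq hev
  -- the interval I = [a, a + 2d] lies in U
  set I : Set ℝ := Set.Icc a (a + 2 * d) with hI_def
  have hIU : I ⊆ U := by
    intro x hx
    obtain ⟨hx1, hx2⟩ := hx
    have hx2' : x ≤ a + 2 * d := hx2
    have hdb : a + 3 * d = b := by rw [hd_def]; ring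
    refine ⟨hIccD ⟨hx1, by linarith⟩, ?_⟩
    simp only [Set.mem_preimage]
    exact hIccD ⟨by linarith, by linarith⟩
  -- S is convex on I
  have hSconv : ConvexOn ℝ I S := by
    apply convexOn_of_deriv2_nonneg (convex_Icc _ _)
    · exact fun x hx => ((hSderiv x (hIU hx)).continuousAt).continuousWithinAt
    · intro x hx
      rw [interior_Icc] at hx
      exact ((hSderiv x (hIU (Set.Ioo_subset_Icc_self hx))).differentiableAt).differentiableWithinAt
    · intro x hx
      rw [interior_Icc] at hx
      exact ((hDS x (hIU (Set.Ioo_subset_Icc_self hx))).differentiableAt).differentiableWithinAt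
    · intro x hx
      rw [interior_Icc] at hx
      have hxU : x ∈ U := hIU (Set.Ioo_subset_Icc_self hx)
      have : deriv (deriv S) x
          = deriv (deriv (R F G)) (x + d) - deriv (deriv (R F G)) x := (hDS x hxU).deriv
      simp only [Function.iterate_succ, Function.iterate_zero, Function.comp_apply, id]
      rw [this]
      have hle : x ≤ x + d := by linarith
      have := hmono2 hxU.1 hxU.2 hle
      linarith
  -- midpoint inequality
  have hmem1 : a ∈ I := by constructor <;> [rfl; linarith]
  have hmem2 : a + 2 * d ∈ I := by constructor <;> [linarith; rfl]
  have hmid := hSconv.2 hmem1 hmem2 (by norm_num : (0:ℝ) ≤ 1/2) (by norm_num : (0:ℝ) ≤ 1/2)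
    (by norm_num)
  have hmid' : S (a + d) ≤ (1/2) * S a + (1/2) * S (a + 2 * d) := by
    have : (1/2 : ℝ) • a + (1/2 : ℝ) • (a + 2 * d) = a + d := by
      simp [smul_eq_mul]; ring
    rw [this] at hmid
    simpa [smul_eq_mul] using hmid
  -- rewrite the goal
  have e1 : G.inv (1 - α) = R F G (a + 2 * d + d) := by
    have : a + 2 * d + d = b := by rw [hd_def]; ring
    rw [this, R, hFb]
  have e2 : G.inv α = R F G a := by rw [R, hFa]
  have e3 : (2/3) * F.inv (1-α) + (1/3) * F.inv α = (a + d) + d := by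
    rw [← hb_def, ← ha_def, hd_def]; ring
  have e4 : (2/3) * F.inv α + (1/3) * F.inv (1-α) = a + d := by
    rw [← hb_def, ← ha_def, hd_def]; ring
  rw [e1, e2, e3, e4]
  have hSa : S a = R F G (a + d) - R F G a := rfl
  have hSad : S (a + d) = R F G (a + d + d) - R F G (a + d) := rfl
  have hSa2d : S (a + 2 * d) = R F G (a + 2 * d + d) - R F G (a + 2 * d) := rfl
  have h2d : a + 2 * d = a + d + d := by ring
  show 0 ≤ R F G (a + 2 * d + d) - 3 * G.inv (F.F ((a + d) + d)) + 3 * G.inv (F.F (a + d))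
      - R F G a
  have : G.inv (F.F ((a + d) + d)) = R F G (a + d + d) := rfl
  rw [this]
  have : G.inv (F.F (a + d)) = R F G (a + d) := rfl
  rw [this]
  have hR2d : R F G (a + 2 * d) = R F G (a + d + d) := by rw [h2d]
  rw [hSa, hSad, hSa2d, hR2d] at hmid'
  linarith
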